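/- Let G be a connected simple graph on a finite vertex set V, f : V → ℕ, and for v ∈ V define φ₀(v) := |{u ∈ V : f(u) ≠ dist_G(u,v)}|, where dist_G is the shortest-path distance. Let λ ∈ ℕ and L := {v ∈ V : φ₀(v) ≤ λ}, and suppose L is nonempty. Suppose there exist τ : V → ℝ and constants c > 0, ρ ≥ 1 such that c·dist_G(x,y) ≤ |τ(x) − τ(y)| ≤ c·ρ·dist_G(x,y) for all x, y ∈ V. Then for every v ∈ L there is an enumeration s_1, …, s_k of L with s_1 = v and Σ_{i=1}^{k−1} dist_G(s_i, s_{i+1}) ≤ 4·ρ·λ; that is, tour_G(L) ≤ 4ρλ. -/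

import Mathlib

/-- The length, in graph distance, of a walk visiting the points of a list in order. -/
noncomputable def graphPathLen {V : Type*} (G : SimpleGraph V) (l : List V) : ℕ :=
  (l.zipWith G.dist l.tail).sum

private lemma split_dist {V : Type*} [DecidableEq V] {G : SimpleGraph V} (hG : G.Connected)
    {u v w : V}
    (p : G.Walk u v) (hlen : p.length = G.dist u v) (hw : w ∈ p.support) :
    G.dist u w = (p.takeUntil w hw).length ∧ G.dist u w + G.dist w v = G.dist u v := by
  have h1 : (p.takeUntil w hw).length + (p.dropUntil w hw).length = p.length := by
    have := congr_arg SimpleGraph.Walk.length (p.take_spec hw)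
    rwa [SimpleGraph.Walk.length_append] at this
  have h2 := SimpleGraph.dist_le (p.takeUntil w hw)
  have h3 := SimpleGraph.dist_le (p.dropUntil w hw)
  have h4 := hG.dist_triangle (u := u) (v := w) (w := v)
  omega

private lemma support_getElem? {V : Type*} [DecidableEq V] {G : SimpleGraph V} {u v w : V}
    (p : G.Walk u v) (hw : w ∈ p.support) :
    p.support[(p.takeUntil w hw).length]? = some w := by
  set q := p.takeUntil w hw with hq
  have hsp : p.support = q.support ++ (p.dropUntil w hw).support.tail := by
    conv_lhs => rw [← p.take_spec hw]
    rw [SimpleGraph.Walk.support_append]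
  have hql : q.support.length = q.length + 1 := q.length_support
  rw [hsp, List.getElem?_append_left (by omega)]
  rw [List.getElem?_eq_getElem (by omega)]
  congr 1
  have := q.getLast_support
  rw [List.getLast_eq_getElem] at this
  simpa [hql] using this

private lemma dist_le_two_lam {V : Type*} [Fintype V] [DecidableEq V]
    {G : SimpleGraph V} (hG : G.Connected) (f : V → ℕ) (lam : ℕ) (u v : V)
    (hu : (Finset.univ.filter (fun w => f w ≠ G.dist w u)).card ≤ lam)
    (hv : (Finset.univ.filter (fun w => f w ≠ G.dist w v)).card ≤ lam) :
    G.dist u v ≤ 2 * lam := by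
  obtain ⟨p, hpath, hlen⟩ := hG.exists_path_of_dist u v
  set d := G.dist u v with hd
  have hnodup : p.support.Nodup := hpath.support_nodup
  set D := p.support.toFinset with hD
  have hcard : D.card = d + 1 := by
    rw [hD, List.toFinset_card_of_nodup hnodup, p.length_support, hlen]
  have hinj : ∀ w₁ ∈ D, ∀ w₂ ∈ D, G.dist u w₁ = G.dist u w₂ → w₁ = w₂ := by
    intro w₁ hw₁ w₂ hw₂ heq
    rw [hD, List.mem_toFinset] at hw₁ hw₂
    have e1 := (split_dist hG p hlen hw₁).1
    have e2 := (split_dist hG p hlen hw₂).1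
    have g1 := support_getElem? p hw₁
    have g2 := support_getElem? p hw₂
    rw [← e1] at g1
    rw [← e2, ← heq] at g2
    rw [g1] at g2
    exact Option.some_inj.mp g2
  have hsplit : (D.filter (fun w => G.dist u w = G.dist w v)).card
      + (D.filter (fun w => ¬ G.dist u w = G.dist w v)).card = D.card :=
    Finset.card_filter_add_card_filter_not _
  have h1 : (D.filter (fun w => G.dist u w = G.dist w v)).card ≤ 1 := by
    refine Finset.card_le_one.mpr ?_
    intro a ha b hb
    rw [Finset.mem_filter] at ha hb
    apply hinj a ha.1 b hb.1
    have ea := (split_dist hG p hlen (List.mem_toFinset.mp ha.1)).2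
    have eb := (split_dist hG p hlen (List.mem_toFinset.mp hb.1)).2
    omega
  have h2 : (D.filter (fun w => ¬ G.dist u w = G.dist w v)).card ≤ 2 * lam := by
    have hsub : D.filter (fun w => ¬ G.dist u w = G.dist w v) ⊆
        (Finset.univ.filter (fun w => f w ≠ G.dist w u)) ∪
        (Finset.univ.filter (fun w => f w ≠ G.dist w v)) := by
      intro w hw
      rw [Finset.mem_filter] at hw
      rw [Finset.mem_union, Finset.mem_filter, Finset.mem_filter]
      by_contra hcon
      push_neg at hcon
      obtain ⟨hcu, hcv⟩ := hcon
      have := hcu (Finset.mem_univ w)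
      have := hcv (Finset.mem_univ w)
      rw [SimpleGraph.dist_comm] at hw
      omega
    calc _ ≤ _ := Finset.card_le_card hsub
      _ ≤ _ := Finset.card_union_le _ _
      _ ≤ 2 * lam := by omega
  omega

/-- The `τ`-length of a list: sum of absolute gaps of `τ` along consecutive entries. -/
noncomputable def tauLen {V : Type*} (τ : V → ℝ) (l : List V) : ℝ :=
  (l.zipWith (fun a b => |τ a - τ b|) l.tail).sum

private lemma tauLen_single {V : Type*} (τ : V → ℝ) (a : V) : tauLen τ [a] = 0 := by
  simp [tauLen]

private lemma tauLen_cons₂ {V : Type*} (τ : V → ℝ) (a b : V) (t : List V) :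
    tauLen τ (a :: b :: t) = |τ a - τ b| + tauLen τ (b :: t) := by
  simp [tauLen]

private lemma graphPathLen_le_tauLen {V : Type*} (G : SimpleGraph V) (τ : V → ℝ)
    (c : ℝ)
    (h : ∀ x y : V, c * (G.dist x y : ℝ) ≤ |τ x - τ y|) :
    ∀ l : List V, c * (graphPathLen G l : ℝ) ≤ tauLen τ l := by
  intro l
  induction l with
  | nil => simp [graphPathLen, tauLen]
  | cons a t ih =>
    cases t with
    | nil => simp [graphPathLen, tauLen]
    | cons b t' =>
      have h1 : graphPathLen G (a :: b :: t') = G.dist a b + graphPathLen G (b :: t') := by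
        simp [graphPathLen]
      rw [h1, tauLen_cons₂]
      push_cast
      have := h a b
      linarith

private lemma tauLen_chain_up {V : Type*} (τ : V → ℝ) :
    ∀ (t : List V) (a : V), List.Chain' (fun x y => τ x ≤ τ y) (a :: t) →
      tauLen τ (a :: t) = τ (t.getLastD a) - τ a := by
  intro t
  induction t with
  | nil => intro a _; simp [tauLen_single]
  | cons b t' ih =>
    intro a hch
    simp only [List.Chain', List.isChain_cons_cons] at hch
    rw [tauLen_cons₂, ih b hch.2, List.getLastD_cons]
    rw [abs_of_nonpos (by linarith [hch.1])]
    ring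

private lemma tauLen_chain_down {V : Type*} (τ : V → ℝ) :
    ∀ (t : List V) (a : V), List.Chain' (fun x y => τ y ≤ τ x) (a :: t) →
      tauLen τ (a :: t) = τ a - τ (t.getLastD a) := by
  intro t
  induction t with
  | nil => intro a _; simp [tauLen_single]
  | cons b t' ih =>
    intro a hch
    simp only [List.Chain', List.isChain_cons_cons] at hch
    rw [tauLen_cons₂, ih b hch.2, List.getLastD_cons]
    rw [abs_of_nonneg (by linarith [hch.1])]
    ring

private lemma tauLen_append {V : Type*} (τ : V → ℝ) :
    ∀ (t : List V) (a b : V) (l₂ : List V),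
      tauLen τ (a :: t ++ b :: l₂)
        = tauLen τ (a :: t) + |τ (t.getLastD a) - τ b| + tauLen τ (b :: l₂) := by
  intro t
  induction t with
  | nil => intro a b l₂; simp [tauLen_single, tauLen_cons₂]
  | cons c t' ih =>
    intro a b l₂
    rw [show (a :: (c :: t') ++ b :: l₂ : List V) = a :: c :: (t' ++ b :: l₂) by simp,
      tauLen_cons₂,
      show (c :: (t' ++ b :: l₂) : List V) = (c :: t' ++ b :: l₂) by simp,
      ih c b l₂, tauLen_cons₂, List.getLastD_cons]
    ring

/-- Core estimate behind the `φ₀` planning bound: if the connected unweighted graph `G`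
embeds into the real line with distortion `ρ`, then the sublevel set
`L = {v : φ₀(v) ≤ λ}` admits, from every starting point of `L`, an enumeration of total
graph-distance length at most `4ρλ`; that is, `tour_G(L) ≤ 4ρλ`. -/
theorem phi0_sublevel_tour_bound
    {V : Type*} [Fintype V] [DecidableEq V]
    (G : SimpleGraph V) (hG : G.Connected) (f : V → ℕ)
    (lam : ℕ)
    (L : Finset V)
    (hL : L = Finset.univ.filter
      (fun v => (Finset.univ.filter (fun u => f u ≠ G.dist u v)).card ≤ lam))
    (hLne : L.Nonempty)
    (τ : V → ℝ) (c ρ : ℝ) (hc : 0 < c) (hρ : 1 ≤ ρ)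
    (hemb : ∀ x y : V,
      c * (G.dist x y : ℝ) ≤ |τ x - τ y| ∧ |τ x - τ y| ≤ c * ρ * (G.dist x y : ℝ)) :
    ∀ v ∈ L, ∃ l : List V, l.Nodup ∧ l.toFinset = L ∧ l.head? = some v ∧
      (graphPathLen G l : ℝ) ≤ 4 * ρ * (lam : ℝ) := by
  intro v hv
  have hmem : ∀ x ∈ L, (Finset.univ.filter (fun u => f u ≠ G.dist u x)).card ≤ lam := by
    intro x hx; rw [hL, Finset.mem_filter] at hx; exact hx.2
  have hdist : ∀ x ∈ L, ∀ y ∈ L, G.dist x y ≤ 2 * lam := fun x hx y hy =>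
    dist_le_two_lam hG f lam x y (hmem x hx) (hmem y hy)
  have hcρ : 0 ≤ c * ρ := by nlinarith
  have hgap : ∀ x ∈ L, ∀ y ∈ L, |τ x - τ y| ≤ c * ρ * (2 * lam) := by
    intro x hx y hy
    calc |τ x - τ y| ≤ c * ρ * (G.dist x y : ℝ) := (hemb x y).2
      _ ≤ c * ρ * (2 * lam) := by
        apply mul_le_mul_of_nonneg_left _ hcρ
        exact_mod_cast hdist x hx y hy
  have hτinj : Function.Injective τ := by
    intro x y hxy
    have h1 := (hemb x y).1
    rw [hxy, sub_self, abs_zero] at h1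
    have hd0 : G.dist x y = 0 := by
      by_contra hne
      have : (1 : ℝ) ≤ (G.dist x y : ℝ) := by exact_mod_cast Nat.one_le_iff_ne_zero.mpr hne
      nlinarith
    exact ((hG.preconnected x y).dist_eq_zero_iff).mp hd0
  haveI : DecidableRel (fun x y : V => τ x ≤ τ y) := fun a b => Classical.dec _
  haveI ht1 : IsTrans V (fun x y : V => τ x ≤ τ y) := ⟨fun _ _ _ => le_trans⟩
  haveI ht2 : IsTrans V (fun x y : V => τ y ≤ τ x) := ⟨fun _ _ _ h h' => le_trans h' h⟩
  haveI : IsAntisymm V (fun x y : V => τ x ≤ τ y) :=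
    ⟨fun _ _ hab hba => hτinj (le_antisymm hab hba)⟩
  haveI : IsTotal V (fun x y : V => τ x ≤ τ y) := ⟨fun _ _ => le_total _ _⟩
  set rr : V → V → Prop := fun x y : V => τ x ≤ τ y with hrr
  set sorted := L.sort rr with hsorted
  have hpw : List.Pairwise rr sorted := Finset.pairwise_sort L rr
  have hvmem : v ∈ sorted := (Finset.mem_sort rr).mpr hv
  obtain ⟨A, B, hAB⟩ := List.append_of_mem hvmem
  have hperm : List.Perm (v :: (A.reverse ++ B)) sorted := by
    rw [hAB]
    exact (((List.reverse_perm A).append_right B).cons v).trans List.perm_middle.symm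
  have hmemL : ∀ x ∈ sorted, x ∈ L := fun x hx => (Finset.mem_sort rr).mp hx
  refine ⟨v :: (A.reverse ++ B), ?_, ?_, rfl, ?_⟩
  · exact hperm.nodup_iff.mpr (Finset.sort_nodup L rr)
  · rw [List.toFinset_eq_of_perm _ _ hperm]; exact Finset.sort_toFinset L rr
  -- the length bound
  have hlow : ∀ x y : V, c * (G.dist x y : ℝ) ≤ |τ x - τ y| := fun x y => (hemb x y).1
  have hA1 : List.Pairwise rr (A ++ [v]) := by
    refine hpw.sublist ?_
    rw [hAB]
    exact (List.cons_sublist_cons.mpr (List.nil_sublist B)).append_left A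
  have hdown : List.Chain' (fun x y => τ y ≤ τ x) (v :: A.reverse) := by
    have h2 : List.Pairwise (fun x y => τ y ≤ τ x) ((A ++ [v]).reverse) :=
      List.pairwise_reverse.mpr hA1
    rw [show ((A ++ [v]).reverse : List V) = v :: A.reverse by simp] at h2
    exact List.Pairwise.isChain h2
  set m := A.reverse.getLastD v with hm
  have hmmem : m ∈ sorted := by
    have h1 : m ∈ v :: A.reverse := List.getLastD_mem_cons
    rcases List.mem_cons.mp h1 with h | h
    · rw [h, hAB]; exact List.mem_append_right _ (List.mem_cons_self)
    · rw [hAB]; exact List.mem_append_left _ (List.mem_reverse.mp h)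
  have htau1 : tauLen τ (v :: A.reverse) = τ v - τ m := tauLen_chain_down τ A.reverse v hdown
  have hbd1 : τ v - τ m ≤ c * ρ * (2 * lam) :=
    le_trans (le_abs_self _) (hgap v hv m (hmemL m hmmem))
  cases B with
  | nil =>
    have : tauLen τ (v :: (A.reverse ++ [])) = τ v - τ m := by
      rw [List.append_nil]; exact htau1
    have hlen := graphPathLen_le_tauLen G τ c hlow (v :: (A.reverse ++ []))
    rw [this] at hlen
    have hfinal : c * (graphPathLen G (v :: (A.reverse ++ [])) : ℝ)
        ≤ c * (4 * ρ * lam) := by nlinarith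
    exact le_of_mul_le_mul_left hfinal hc
  | cons b B' =>
    -- m comes before b in sorted order
    have hmb : τ m ≤ τ b := by
      have h3 : List.Pairwise rr ((A ++ [v]) ++ b :: B') := by
        rw [show ((A ++ [v]) ++ b :: B' : List V) = A ++ v :: (b :: B') by simp]
        rw [← hAB]; exact hpw
      have h4 := (List.pairwise_append.mp h3).2.2
      have h5 : m ∈ A ++ [v] := by
        have h1 : m ∈ v :: A.reverse := List.getLastD_mem_cons
        rw [show (v :: A.reverse : List V) = (A ++ [v]).reverse by simp] at h1
        exact List.mem_reverse.mp h1
      exact h4 m h5 b (List.mem_cons_self)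
    have hup : List.Chain' (fun x y => τ x ≤ τ y) (b :: B') := by
      refine List.Pairwise.isChain (hpw.sublist ?_)
      rw [hAB]
      exact (List.sublist_cons_self v (b :: B')).trans (List.sublist_append_right A _)
    have htau2 : tauLen τ (b :: B') = τ (B'.getLastD b) - τ b :=
      tauLen_chain_up τ B' b hup
    set e := B'.getLastD b with he
    have hemem : e ∈ sorted := by
      have h1 : e ∈ b :: B' := List.getLastD_mem_cons
      rw [hAB]
      exact List.mem_append_right _ (List.mem_cons_of_mem v h1)
    have hbd2 : τ e - τ m ≤ c * ρ * (2 * lam) :=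
      le_trans (le_abs_self _) (hgap e (hmemL e hemem) m (hmemL m hmmem))
    have happ : tauLen τ (v :: (A.reverse ++ b :: B'))
        = tauLen τ (v :: A.reverse) + |τ m - τ b| + tauLen τ (b :: B') := by
      rw [show (v :: (A.reverse ++ b :: B') : List V) = (v :: A.reverse ++ b :: B') by simp]
      exact tauLen_append τ A.reverse v b B'
    have habs : |τ m - τ b| = τ b - τ m := by
      rw [abs_of_nonpos (by linarith)]; ring
    have hlen := graphPathLen_le_tauLen G τ c hlow (v :: (A.reverse ++ b :: B'))
    rw [happ, htau1, htau2, habs] at hlen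
    have hfinal : c * (graphPathLen G (v :: (A.reverse ++ b :: B')) : ℝ)
        ≤ c * (4 * ρ * lam) := by nlinarith
    exact le_of_mul_le_mul_left hfinal hc
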